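/- arXiv:2006.05110 — 3 statements merged into one kernel-verified Lean document; each statement's English description precedes it below -/
import Mathlib

section
/- Let λ be a measure on (0,∞) satisfying ∫ (z ∧ 1) dλ(z) < ∞. Then λ satisfies condition (F6): there exists ε₀ > 0 such that liminf_{a→0⁺} [ exp(ε₀ ∫_{(a,1]} z dλ(z)) · ∫_{(0,a]} z² dλ(z) ] = 0. -/
open MeasureTheory Set Filter

/-- The quantity appearing in condition (F6):
`exp(ε₀ ∫_{(a,1]} z ν(dz)) · ∫_{(0,a]} z² ν(dz)`. -/
noncomputable def F6expr (ν : Measure ℝ) (ε₀ a : ℝ) : ENNReal :=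
  ENNReal.ofReal (Real.exp (ε₀ * (∫⁻ z in Ioc a 1, ENNReal.ofReal z ∂ν).toReal)) *
    ∫⁻ z in Ioc (0 : ℝ) a, ENNReal.ofReal (z ^ 2) ∂ν

/-- Condition (F6) with a given constant `ε₀`. -/
def F6with (ν : Measure ℝ) (ε₀ : ℝ) : Prop :=
  liminf (fun a : ℝ => F6expr ν ε₀ a) (nhdsWithin 0 (Ioi 0)) = 0

/-- Condition (F6). -/
def F6 (ν : Measure ℝ) : Prop := ∃ ε₀ > (0 : ℝ), F6with ν ε₀

theorem stmt_10 (lam : Measure ℝ)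
    (hlam : ∫⁻ z in Ioi (0 : ℝ), ENNReal.ofReal (min z 1) ∂lam < ⊤) :
    F6 lam := by
  classical
  refine ⟨1, one_pos, ?_⟩
  set μ : Measure ℝ := lam.withDensity (fun z => ENNReal.ofReal (min z 1)) with hμ
  have hmeasg : Measurable (fun z : ℝ => ENNReal.ofReal (min z 1)) := by
    measurability
  have hμapp : ∀ s : Set ℝ, MeasurableSet s →
      μ s = ∫⁻ z in s, ENNReal.ofReal (min z 1) ∂lam := by
    intro s hs
    simp [hμ, withDensity_apply _ hs]
  have hC : μ (Ioi (0:ℝ)) < ⊤ := by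
    rw [hμapp _ measurableSet_Ioi]; exact hlam
  set C : ℝ := (μ (Ioi (0:ℝ))).toReal with hCdef
  set K : ℝ := Real.exp C with hKdef
  -- Bound on the exponential factor for 0 < a
  have hexp : ∀ a : ℝ, 0 < a →
      Real.exp (1 * (∫⁻ z in Ioc a 1, ENNReal.ofReal z ∂lam).toReal) ≤ K := by
    intro a ha
    have h1 : (∫⁻ z in Ioc a 1, ENNReal.ofReal z ∂lam) ≤ μ (Ioi (0:ℝ)) := by
      rw [hμapp _ measurableSet_Ioi]
      calc (∫⁻ z in Ioc a 1, ENNReal.ofReal z ∂lam)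
          ≤ ∫⁻ z in Ioc a 1, ENNReal.ofReal (min z 1) ∂lam := by
            refine setLIntegral_mono hmeasg ?_
            intro z hz
            exact ENNReal.ofReal_le_ofReal (le_min le_rfl hz.2)
        _ ≤ ∫⁻ z in Ioi 0, ENNReal.ofReal (min z 1) ∂lam := by
            refine lintegral_mono_set ?_
            intro z hz
            exact lt_trans ha hz.1
    have h2 : (∫⁻ z in Ioc a 1, ENNReal.ofReal z ∂lam).toReal ≤ C :=
      ENNReal.toReal_mono hC.ne h1
    rw [one_mul]
    exact Real.exp_le_exp.mpr h2
  -- Bound on the second factor for 0 < a ≤ 1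
  have hsq : ∀ a : ℝ, 0 < a → a ≤ 1 →
      (∫⁻ z in Ioc (0:ℝ) a, ENNReal.ofReal (z ^ 2) ∂lam) ≤ μ (Ioc (0:ℝ) a) := by
    intro a ha ha1
    rw [hμapp _ measurableSet_Ioc]
    refine setLIntegral_mono hmeasg ?_
    intro z hz
    refine ENNReal.ofReal_le_ofReal (le_min ?_ ?_)
    · have hz1 : z ≤ 1 := hz.2.trans ha1
      calc z ^ 2 = z * z := sq z
        _ ≤ z * 1 := by nlinarith [hz.1]
        _ = z := mul_one z
    · have hz1 : z ≤ 1 := hz.2.trans ha1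
      nlinarith [hz.1]
  have hbound : ∀ a : ℝ, 0 < a → a ≤ 1 →
      F6expr lam 1 a ≤ ENNReal.ofReal K * μ (Ioc (0:ℝ) a) := by
    intro a ha ha1
    unfold F6expr
    exact mul_le_mul' (ENNReal.ofReal_le_ofReal (hexp a ha)) (hsq a ha ha1)
  -- The sequence aₙ = 1/(n+1)
  set u : ℕ → ℝ := fun n => 1 / (n + 1) with hu
  have hupos : ∀ n, 0 < u n := fun n => by positivity
  have hule : ∀ n, u n ≤ 1 := by
    intro n
    rw [hu]
    rw [div_le_one (by positivity)]
    exact le_add_of_nonneg_left (Nat.cast_nonneg n)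
  have hut : Tendsto u atTop (nhdsWithin 0 (Ioi 0)) := by
    refine tendsto_nhdsWithin_of_tendsto_nhds_of_eventually_within _
      tendsto_one_div_add_atTop_nhds_zero_nat ?_
    exact Eventually.of_forall fun n => hupos n
  -- μ (Ioc 0 (u n)) → 0
  have hTtend : Tendsto (fun n => μ (Ioc (0:ℝ) (u n))) atTop (nhds 0) := by
    have hanti : Antitone (fun n => Ioc (0:ℝ) (u n)) := by
      intro m n hmn
      apply Ioc_subset_Ioc le_rfl
      rw [hu]
      apply one_div_le_one_div_of_le (by positivity)
      exact_mod_cast add_le_add_left (Nat.cast_le.mpr hmn) 1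
    have hinter : (⋂ n, Ioc (0:ℝ) (u n)) = ∅ := by
      ext z
      simp only [mem_iInter, mem_Ioc, mem_empty_iff_false, iff_false, not_forall]
      by_cases hz : 0 < z
      · obtain ⟨n, hn⟩ := exists_nat_gt (1 / z)
        refine ⟨n, fun h => ?_⟩
        have h1 : 1 / z < n + 1 := hn.trans (lt_add_one _)
        have : u n < z := by
          rw [hu]
          rw [div_lt_iff₀ (by positivity)] at h1 ⊢
          linarith [mul_comm z ((n:ℝ)+1)]
        exact absurd h.2 (not_le.mpr this)
      · exact ⟨0, fun h => hz h.1⟩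
    have := MeasureTheory.tendsto_measure_iInter_atTop
      (μ := μ) (s := fun n => Ioc (0:ℝ) (u n))
      (fun n => (measurableSet_Ioc).nullMeasurableSet) hanti
      ⟨0, by
        refine ne_of_lt (lt_of_le_of_lt (measure_mono ?_) hC)
        intro z hz; exact hz.1⟩
    rwa [hinter, measure_empty] at this
  have hFtend : Tendsto (fun n => ENNReal.ofReal K * μ (Ioc (0:ℝ) (u n))) atTop (nhds 0) := by
    have := ENNReal.Tendsto.const_mul (a := ENNReal.ofReal K) hTtend
      (Or.inr ENNReal.ofReal_ne_top)
    simpa using this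
  -- liminf ≤ c for every c > 0
  rw [F6with]
  refine le_antisymm ?_ zero_le
  by_contra hpos
  push_neg at hpos
  rw [pos_iff_ne_zero] at hpos
  obtain ⟨c, hc0, hcl⟩ := exists_between (pos_iff_ne_zero.mpr hpos)
  have hfreq : ∃ᶠ a in nhdsWithin (0:ℝ) (Ioi 0), F6expr lam 1 a ≤ c := by
    have hev : ∀ᶠ n in atTop, F6expr lam 1 (u n) ≤ c := by
      filter_upwards [hFtend.eventually_lt_const hc0] with n hn
      exact le_of_lt (lt_of_le_of_lt (hbound (u n) (hupos n) (hule n)) hn)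
    exact hut.frequently hev.frequently
  have := liminf_le_of_frequently_le hfreq
  exact absurd (lt_of_le_of_lt this hcl) (lt_irrefl _)
end

section
/- Let λ₁, λ₂ be measures on (0,∞) such that λ₁ satisfies condition (F6) and λ₂ satisfies ∫ (z ∧ 1) dλ₂(z) < ∞. Then λ = λ₁ + λ₂ satisfies condition (F6). -/
open MeasureTheory Set Filter

noncomputable def Iν (ν : Measure ℝ) (a : ℝ) : ENNReal := ∫⁻ z in Ioc a 1, ENNReal.ofReal z ∂ν
noncomputable def Jν (ν : Measure ℝ) (a : ℝ) : ENNReal := ∫⁻ z in Ioc (0:ℝ) a, ENNReal.ofReal (z^2) ∂ν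

lemma Iν_add (ν₁ ν₂ : Measure ℝ) (a : ℝ) : Iν (ν₁+ν₂) a = Iν ν₁ a + Iν ν₂ a := by
  simp [Iν, Measure.restrict_add, lintegral_add_measure]

lemma Jν_add (ν₁ ν₂ : Measure ℝ) (a : ℝ) : Jν (ν₁+ν₂) a = Jν ν₁ a + Jν ν₂ a := by
  simp [Jν, Measure.restrict_add, lintegral_add_measure]

lemma Iν_anti (ν : Measure ℝ) {a b : ℝ} (h : b ≤ a) : Iν ν a ≤ Iν ν b :=
  lintegral_mono_set (Ioc_subset_Ioc_left h)

lemma Jν_mono (ν : Measure ℝ) {a b : ℝ} (h : a ≤ b) : Jν ν a ≤ Jν ν b :=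
  lintegral_mono_set (Ioc_subset_Ioc_right h)

lemma Iν_split (ν : Measure ℝ) {a b : ℝ} (hb : 0 < b) (hba : b ≤ a) (ha1 : a ≤ 1) :
    Iν ν b ≤ Iν ν a + (ENNReal.ofReal b)⁻¹ * Jν ν a := by
  have hsplit : Iν ν b = (∫⁻ z in Ioc b a, ENNReal.ofReal z ∂ν) + Iν ν a := by
    rw [Iν, ← Ioc_union_Ioc_eq_Ioc hba ha1,
      lintegral_union measurableSet_Ioc (Set.Ioc_disjoint_Ioc_of_le le_rfl)]
    rfl
  rw [hsplit, add_comm]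
  gcongr
  calc ∫⁻ z in Ioc b a, ENNReal.ofReal z ∂ν
      ≤ ∫⁻ z in Ioc b a, (ENNReal.ofReal b)⁻¹ * ENNReal.ofReal (z^2) ∂ν := by
        refine setLIntegral_mono' measurableSet_Ioc fun z hz => ?_
        have hbz : b ≤ z := hz.1.le
        have h1 : ENNReal.ofReal b * ENNReal.ofReal z ≤ ENNReal.ofReal (z^2) := by
          rw [← ENNReal.ofReal_mul hb.le]
          exact ENNReal.ofReal_le_ofReal (by nlinarith)
        calc ENNReal.ofReal z = (ENNReal.ofReal b)⁻¹ * (ENNReal.ofReal b * ENNReal.ofReal z) := by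
              rw [← mul_assoc, ENNReal.inv_mul_cancel (ENNReal.ofReal_pos.mpr hb).ne' (by simp), one_mul]
          _ ≤ (ENNReal.ofReal b)⁻¹ * ENNReal.ofReal (z^2) := by gcongr
    _ = (ENNReal.ofReal b)⁻¹ * ∫⁻ z in Ioc b a, ENNReal.ofReal (z^2) ∂ν :=
        lintegral_const_mul' _ _ (by simp [hb])
    _ ≤ (ENNReal.ofReal b)⁻¹ * Jν ν a := by
        gcongr
        exact lintegral_mono_set (Ioc_subset_Ioc_left hb.le)

lemma Jν_le_min (ν : Measure ℝ) {a : ℝ} (ha0 : 0 < a) (ha1 : a ≤ 1) :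
    Jν ν a ≤ ENNReal.ofReal a * ∫⁻ z in Ioi (0:ℝ), ENNReal.ofReal (min z 1) ∂ν := by
  calc Jν ν a ≤ ∫⁻ z in Ioc (0:ℝ) a, ENNReal.ofReal a * ENNReal.ofReal (min z 1) ∂ν := by
        refine setLIntegral_mono' measurableSet_Ioc fun z hz => ?_
        rw [← ENNReal.ofReal_mul ha0.le]
        refine ENNReal.ofReal_le_ofReal ?_
        have h1 : min z 1 = z := min_eq_left (hz.2.trans ha1)
        rw [h1, sq]
        exact mul_le_mul_of_nonneg_right hz.2 hz.1.le
    _ = ENNReal.ofReal a * ∫⁻ z in Ioc (0:ℝ) a, ENNReal.ofReal (min z 1) ∂ν :=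
        lintegral_const_mul' _ _ (by simp)
    _ ≤ _ := by
        gcongr
        exact Ioc_subset_Ioi_self

lemma Iν_le_min (ν : Measure ℝ) {a : ℝ} (ha : 0 ≤ a) :
    Iν ν a ≤ ∫⁻ z in Ioi (0:ℝ), ENNReal.ofReal (min z 1) ∂ν := by
  calc Iν ν a = ∫⁻ z in Ioc a 1, ENNReal.ofReal (min z 1) ∂ν := by
        refine setLIntegral_congr_fun measurableSet_Ioc (fun z hz => ?_)
        rw [min_eq_left hz.2]
    _ ≤ _ := lintegral_mono_set fun z hz => lt_of_le_of_lt ha hz.1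

lemma F6expr_eq (ν : Measure ℝ) (ε a : ℝ) :
    F6expr ν ε a = ENNReal.ofReal (Real.exp (ε * (Iν ν a).toReal)) * Jν ν a := rfl

lemma key_real (ε₀ C' c' s u i₁b i₂b j₁b j₂b δ' : ℝ)
    (hε₀ : 0 < ε₀) (hu : 0 ≤ u) (hC'0 : 0 ≤ C')
    (hi₁ : i₁b ≤ u + 1) (hi₂ : i₂b ≤ C')
    (hj₁0 : 0 ≤ j₁b) (hj₂0 : 0 ≤ j₂b)
    (hj₁ : Real.exp (ε₀ * u) * j₁b ≤ c')
    (hj₂ : Real.exp (ε₀/4 * u) * j₂b ≤ s * C')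
    (hc' : Real.exp (ε₀/4 * C' + ε₀/4) * c' ≤ δ'/4)
    (hs : Real.exp (ε₀/4 * C' + ε₀/4) * ((C'+1) * s) ≤ δ'/4)
    (hs0 : 0 ≤ s) :
    Real.exp (ε₀/4 * (i₁b + i₂b)) * (j₁b + j₂b) ≤ δ'/2 := by
  set ε := ε₀/4 with hε
  have hεpos : 0 < ε := by positivity
  have he1 : Real.exp (ε * (i₁b + i₂b)) ≤ Real.exp (ε * u) * Real.exp (ε * C' + ε) := by
    rw [← Real.exp_add]
    apply Real.exp_le_exp.mpr
    nlinarith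
  have he2 : Real.exp (ε * u) * j₁b ≤ c' := by
    calc Real.exp (ε * u) * j₁b ≤ Real.exp (ε₀ * u) * j₁b := by
          apply mul_le_mul_of_nonneg_right _ hj₁0
          apply Real.exp_le_exp.mpr; nlinarith
      _ ≤ c' := hj₁
  have he3 : Real.exp (ε * u) * j₂b ≤ (C' + 1) * s := by
    calc Real.exp (ε * u) * j₂b ≤ s * C' := hj₂
      _ ≤ (C' + 1) * s := by nlinarith
  have hE0 : (0:ℝ) < Real.exp (ε * C' + ε) := Real.exp_pos _
  calc Real.exp (ε * (i₁b + i₂b)) * (j₁b + j₂b)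
      ≤ (Real.exp (ε * u) * Real.exp (ε * C' + ε)) * (j₁b + j₂b) := by
        apply mul_le_mul_of_nonneg_right he1 (by positivity)
    _ = Real.exp (ε * C' + ε) * (Real.exp (ε * u) * j₁b + Real.exp (ε * u) * j₂b) := by ring
    _ ≤ Real.exp (ε * C' + ε) * (c' + (C' + 1) * s) := by
        apply mul_le_mul_of_nonneg_left _ hE0.le
        exact add_le_add he2 he3
    _ = Real.exp (ε * C' + ε) * c' + Real.exp (ε * C' + ε) * ((C' + 1) * s) := by ring
    _ ≤ δ'/4 + δ'/4 := add_le_add hc' hs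
    _ = δ'/2 := by ring

theorem stmt_13 (lam₁ lam₂ : Measure ℝ) (hF6 : F6 lam₁)
    (hlam₂ : ∫⁻ z in Ioi (0 : ℝ), ENNReal.ofReal (min z 1) ∂lam₂ < ⊤) :
    F6 (lam₁ + lam₂) := by
  obtain ⟨ε₀, hε₀, hl⟩ := hF6
  set C₂ : ENNReal := ∫⁻ z in Ioi (0:ℝ), ENNReal.ofReal (min z 1) ∂lam₂ with hC₂def
  have hC₂ : C₂ ≠ ⊤ := hlam₂.ne
  set C' : ℝ := C₂.toReal with hC'def
  have hC'0 : 0 ≤ C' := ENNReal.toReal_nonneg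
  have hC₂eq : C₂ = ENNReal.ofReal C' := (ENNReal.ofReal_toReal hC₂).symm
  have hfreq : ∀ c : ENNReal, 0 < c → ∀ r > (0:ℝ), ∃ a, 0 < a ∧ a < r ∧ F6expr lam₁ ε₀ a < c := by
    intro c hc r hr
    have h1 : liminf (fun a : ℝ => F6expr lam₁ ε₀ a) (nhdsWithin 0 (Ioi 0)) < c := hl ▸ hc
    have h2 := Filter.frequently_lt_of_liminf_lt (by isBoundedDefault) h1
    rw [(nhdsGT_basis (0:ℝ)).frequently_iff] at h2
    obtain ⟨a, ⟨ha0, har⟩, hfa⟩ := h2 r hr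
    exact ⟨a, ha0, har, hfa⟩
  refine ⟨ε₀/4, by positivity, ?_⟩
  show liminf (fun a : ℝ => F6expr (lam₁ + lam₂) (ε₀/4) a) (nhdsWithin 0 (Ioi 0)) = 0
  refine le_antisymm ?_ zero_le
  refine ENNReal.le_of_forall_pos_le_add fun δ hδ _ => ?_
  rw [zero_add]
  refine Filter.liminf_le_of_frequently_le ?_
  rw [(nhdsGT_basis (0:ℝ)).frequently_iff]
  intro r₀ hr₀
  -- goal : ∃ a ∈ Ioo 0 r₀, F6expr (lam₁+lam₂) (ε₀/4) a ≤ δ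
  set δ' : ℝ := (δ : ℝ) with hδ'def
  have hδ'0 : 0 < δ' := hδ
  have hδeq : ENNReal.ofReal δ' = (δ : ENNReal) := ENNReal.ofReal_coe_nnreal
  set r : ℝ := min r₀ 1 with hrdef
  have hr : 0 < r := lt_min hr₀ one_pos
  have hr1 : r ≤ 1 := min_le_right _ _
  have hrr₀ : r ≤ r₀ := min_le_left _ _
  suffices h : ∃ a, 0 < a ∧ a < r ∧ F6expr (lam₁ + lam₂) (ε₀/4) a ≤ ENNReal.ofReal δ' by
    obtain ⟨a, ha0, har, hle⟩ := h
    exact ⟨a, ⟨ha0, lt_of_lt_of_le har hrr₀⟩, hδeq ▸ hle⟩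
  by_cases hA : ∃ a₀, 0 < a₀ ∧ a₀ < r ∧ Iν lam₁ a₀ = ⊤
  · -- Case A : the first integral is infinite near 0
    obtain ⟨a₀, ha₀0, ha₀r, ha₀top⟩ := hA
    set ρ : ℝ := min a₀ (δ'/(2*(C'+1))) with hρdef
    have hρ0 : 0 < ρ := lt_min ha₀0 (by positivity)
    obtain ⟨a, ha0, haρ, hFa⟩ := hfreq (ENNReal.ofReal (δ'/2))
      (ENNReal.ofReal_pos.mpr (by positivity)) ρ hρ0
    have haa₀ : a ≤ a₀ := (lt_of_lt_of_le haρ (min_le_left _ _)).le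
    have har : a < r := lt_of_le_of_lt haa₀ ha₀r
    have ha1 : a ≤ 1 := har.le.trans hr1
    have hIa_top : Iν lam₁ a = ⊤ :=
      top_le_iff.mp (ha₀top ▸ lintegral_mono_set (Ioc_subset_Ioc_left haa₀))
    have hJ₁ : Jν lam₁ a ≤ ENNReal.ofReal (δ'/2) := by
      have heq : F6expr lam₁ ε₀ a = Jν lam₁ a := by
        rw [F6expr_eq, hIa_top]
        simp
      rw [heq] at hFa
      exact hFa.le
    have hItop : Iν (lam₁+lam₂) a = ⊤ := by
      rw [Iν, Measure.restrict_add, lintegral_add_measure]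
      rw [Iν] at hIa_top
      simp [hIa_top]
    have hJ₂ : Jν lam₂ a ≤ ENNReal.ofReal (δ'/2) := by
      calc Jν lam₂ a ≤ ENNReal.ofReal a * C₂ := Jν_le_min _ ha0 ha1
        _ = ENNReal.ofReal (a * C') := by rw [hC₂eq, ← ENNReal.ofReal_mul ha0.le]
        _ ≤ ENNReal.ofReal (δ'/2) := by
            apply ENNReal.ofReal_le_ofReal
            have haρ2 : a ≤ δ'/(2*(C'+1)) := (lt_of_lt_of_le haρ (min_le_right _ _)).le
            rw [le_div_iff₀ (by positivity)] at haρ2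
            nlinarith
    refine ⟨a, ha0, har, ?_⟩
    have heq2 : F6expr (lam₁+lam₂) (ε₀/4) a = Jν lam₁ a + Jν lam₂ a := by
      rw [F6expr_eq, hItop]
      show ENNReal.ofReal (Real.exp (ε₀/4 * (⊤:ENNReal).toReal)) * Jν (lam₁+lam₂) a = _
      rw [Jν, Measure.restrict_add, lintegral_add_measure]
      simp [Jν]
    rw [heq2]
    calc Jν lam₁ a + Jν lam₂ a ≤ ENNReal.ofReal (δ'/2) + ENNReal.ofReal (δ'/2) :=
          add_le_add hJ₁ hJ₂
      _ = ENNReal.ofReal δ' := by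
          rw [← ENNReal.ofReal_add (by positivity) (by positivity)]
          ring_nf
  · -- Case B : Iν lam₁ is finite on (0, r)
    push_neg at hA
    set K : ℝ := Real.exp (ε₀/4 * C' + ε₀/4) with hKdef
    have hK0 : (0:ℝ) < K := Real.exp_pos _
    set c' : ℝ := min 1 (δ'/(4*K)) with hc'def
    have hc'0 : 0 < c' := lt_min one_pos (by positivity)
    have hc'1 : c' ≤ 1 := min_le_left _ _
    have hKc' : K * c' ≤ δ'/4 := by
      calc K * c' ≤ K * (δ'/(4*K)) :=
            mul_le_mul_of_nonneg_left (min_le_right _ _) hK0.le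
        _ = δ'/4 := by field_simp
    set s : ℝ := δ'/(4*K*(C'+1)) with hsdef
    have hs0 : 0 < s := by positivity
    have hKs : K * ((C'+1) * s) ≤ δ'/4 := by
      apply le_of_eq
      rw [hsdef]
      field_simp
    set r₁ : ℝ := min r (s^2) with hr₁def
    have hr₁0 : 0 < r₁ := lt_min hr (by positivity)
    obtain ⟨a, ha0, har₁, hFa⟩ := hfreq (ENNReal.ofReal c') (ENNReal.ofReal_pos.mpr hc'0) r₁ hr₁0
    have har : a < r := lt_of_lt_of_le har₁ (min_le_left _ _)
    have has2 : a < s^2 := lt_of_lt_of_le har₁ (min_le_right _ _)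
    have ha1 : a ≤ 1 := har.le.trans hr1
    have hIa : Iν lam₁ a ≠ ⊤ := hA a ha0 har
    set u : ℝ := (Iν lam₁ a).toReal with hudef
    have hu0 : 0 ≤ u := ENNReal.toReal_nonneg
    have hJ₁top : Jν lam₁ a ≠ ⊤ := by
      intro htop
      rw [F6expr_eq, htop, ENNReal.mul_top (by simp [Real.exp_pos])] at hFa
      exact absurd hFa not_top_lt
    set j₁ : ℝ := (Jν lam₁ a).toReal with hj₁def
    have hj₁0 : 0 ≤ j₁ := ENNReal.toReal_nonneg
    have hj₁e : Real.exp (ε₀ * u) * j₁ ≤ c' := by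
      rw [F6expr_eq, ← ENNReal.ofReal_toReal hJ₁top,
        ← ENNReal.ofReal_mul (Real.exp_pos _).le] at hFa
      exact ((ENNReal.ofReal_lt_ofReal_iff hc'0).mp hFa).le
    set b : ℝ := min a (Real.exp (-(ε₀/2 * u))) with hbdef
    have hb0 : 0 < b := lt_min ha0 (Real.exp_pos _)
    have hba : b ≤ a := min_le_left _ _
    have hbe : b ≤ Real.exp (-(ε₀/2 * u)) := min_le_right _ _
    have hbr : b < r := lt_of_le_of_lt hba har
    have hb1 : b ≤ 1 := hba.trans ha1
    have hIb : Iν lam₁ b ≠ ⊤ := hA b hb0 hbr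
    have hI₂b : Iν lam₂ b ≤ C₂ := Iν_le_min lam₂ hb0.le
    have hI₂btop : Iν lam₂ b ≠ ⊤ := ne_top_of_le_ne_top hC₂ hI₂b
    have hJ₁b : Jν lam₁ b ≤ Jν lam₁ a := Jν_mono _ hba
    have hJ₁btop : Jν lam₁ b ≠ ⊤ := ne_top_of_le_ne_top hJ₁top hJ₁b
    have hJ₂b : Jν lam₂ b ≤ ENNReal.ofReal b * C₂ := Jν_le_min _ hb0 hb1
    have hmulne : ENNReal.ofReal b * C₂ ≠ ⊤ := ENNReal.mul_ne_top ENNReal.ofReal_ne_top hC₂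
    have hJ₂btop : Jν lam₂ b ≠ ⊤ := ne_top_of_le_ne_top hmulne hJ₂b
    have hi₂C : (Iν lam₂ b).toReal ≤ C' := ENNReal.toReal_mono hC₂ hI₂b
    have hj₁b : (Jν lam₁ b).toReal ≤ j₁ := ENNReal.toReal_mono hJ₁top hJ₁b
    have hj₂b : (Jν lam₂ b).toReal ≤ b * C' := by
      calc (Jν lam₂ b).toReal ≤ (ENNReal.ofReal b * C₂).toReal := ENNReal.toReal_mono hmulne hJ₂b
        _ = b * C' := by rw [ENNReal.toReal_mul, ENNReal.toReal_ofReal hb0.le]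
    -- bound on Iν lam₁ b
    have hi₁ : (Iν lam₁ b).toReal ≤ u + 1 := by
      by_cases hcase : a ≤ Real.exp (-(ε₀/2 * u))
      · have hb_eq : b = a := min_eq_left hcase
        rw [hb_eq, ← hudef]
        linarith
      · have hbval : b = Real.exp (-(ε₀/2 * u)) := min_eq_right (le_of_not_ge hcase)
        have hbinv : b⁻¹ = Real.exp (ε₀/2 * u) := by
          rw [hbval, Real.exp_neg, inv_inv]
        have hsplit := Iν_split lam₁ hb0 hba ha1
        have hmulne2 : (ENNReal.ofReal b)⁻¹ * Jν lam₁ a ≠ ⊤ :=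
          ENNReal.mul_ne_top (ENNReal.inv_ne_top.mpr (ENNReal.ofReal_pos.mpr hb0).ne') hJ₁top
        have hRne : Iν lam₁ a + (ENNReal.ofReal b)⁻¹ * Jν lam₁ a ≠ ⊤ :=
          ENNReal.add_ne_top.mpr ⟨hIa, hmulne2⟩
        have h1 : (Iν lam₁ b).toReal ≤ u + b⁻¹ * j₁ := by
          have h := ENNReal.toReal_mono hRne hsplit
          rwa [ENNReal.toReal_add hIa hmulne2, ENNReal.toReal_mul, ENNReal.toReal_inv,
            ENNReal.toReal_ofReal hb0.le] at h
        have h2 : b⁻¹ * j₁ ≤ 1 := by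
          rw [hbinv]
          calc Real.exp (ε₀/2 * u) * j₁ ≤ Real.exp (ε₀ * u) * j₁ := by
                apply mul_le_mul_of_nonneg_right _ hj₁0
                apply Real.exp_le_exp.mpr
                nlinarith
            _ ≤ c' := hj₁e
            _ ≤ 1 := hc'1
        linarith
    -- bound on the lam₂ part
    have hbs : b ≤ s^2 := hba.trans has2.le
    have hx : Real.exp (ε₀/4 * u) * b ≤ s := by
      have hx0 : (0:ℝ) ≤ Real.exp (ε₀/4 * u) * b := by positivity
      have hsq : (Real.exp (ε₀/4 * u) * b)^2 ≤ s^2 := by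
        have he : Real.exp (ε₀/4 * u) * Real.exp (ε₀/4 * u) = Real.exp (ε₀/2 * u) := by
          rw [← Real.exp_add]
          ring_nf
        have hb2 : Real.exp (ε₀/2 * u) * b ≤ 1 := by
          calc Real.exp (ε₀/2 * u) * b ≤ Real.exp (ε₀/2 * u) * Real.exp (-(ε₀/2 * u)) :=
                mul_le_mul_of_nonneg_left hbe (Real.exp_pos _).le
            _ = 1 := by rw [← Real.exp_add]; simp
        have hexpand : (Real.exp (ε₀/4 * u) * b)^2
            = (Real.exp (ε₀/4 * u) * Real.exp (ε₀/4 * u)) * (b * b) := by ring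
        calc (Real.exp (ε₀/4 * u) * b)^2
            = (Real.exp (ε₀/2 * u) * b) * b := by rw [hexpand, he]; ring
          _ ≤ 1 * b := mul_le_mul_of_nonneg_right hb2 hb0.le
          _ = b := one_mul b
          _ ≤ s^2 := hbs
      calc Real.exp (ε₀/4 * u) * b = Real.sqrt ((Real.exp (ε₀/4 * u) * b)^2) :=
            (Real.sqrt_sq hx0).symm
        _ ≤ Real.sqrt (s^2) := Real.sqrt_le_sqrt hsq
        _ = s := Real.sqrt_sq hs0.le
    have hj₂key : Real.exp (ε₀/4 * u) * (Jν lam₂ b).toReal ≤ s * C' := by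
      calc Real.exp (ε₀/4 * u) * (Jν lam₂ b).toReal
          ≤ Real.exp (ε₀/4 * u) * (b * C') :=
            mul_le_mul_of_nonneg_left hj₂b (Real.exp_pos _).le
        _ = (Real.exp (ε₀/4 * u) * b) * C' := by ring
        _ ≤ s * C' := mul_le_mul_of_nonneg_right hx hC'0
    have hj₁key : Real.exp (ε₀ * u) * (Jν lam₁ b).toReal ≤ c' :=
      le_trans (mul_le_mul_of_nonneg_left hj₁b (Real.exp_pos _).le) hj₁e
    have hkey := key_real ε₀ C' c' s u (Iν lam₁ b).toReal (Iν lam₂ b).toReal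
      (Jν lam₁ b).toReal (Jν lam₂ b).toReal δ' hε₀ hu0 hC'0 hi₁ hi₂C
      ENNReal.toReal_nonneg ENNReal.toReal_nonneg hj₁key hj₂key hKc' hKs hs0.le
    refine ⟨b, hb0, hbr, ?_⟩
    have hfeq : F6expr (lam₁+lam₂) (ε₀/4) b
        = ENNReal.ofReal (Real.exp (ε₀/4 * ((Iν lam₁ b).toReal + (Iν lam₂ b).toReal))
            * ((Jν lam₁ b).toReal + (Jν lam₂ b).toReal)) := by
      rw [F6expr_eq, Iν_add, Jν_add, ENNReal.toReal_add hIb hI₂btop,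
        ENNReal.ofReal_mul (Real.exp_pos _).le]
      congr 1
      rw [← ENNReal.toReal_add hJ₁btop hJ₂btop,
        ENNReal.ofReal_toReal (ENNReal.add_ne_top.mpr ⟨hJ₁btop, hJ₂btop⟩)]
    rw [hfeq]
    calc ENNReal.ofReal _ ≤ ENNReal.ofReal (δ'/2) := ENNReal.ofReal_le_ofReal hkey
      _ ≤ ENNReal.ofReal δ' := ENNReal.ofReal_le_ofReal (by linarith)
end

section
/- The measure λ(dz) = (-log z)/z² dz on (0, 1/2] does not satisfy condition (F6): for every ε₀ > 0, liminf_{a↓0} exp(ε₀ ∫_{(a,1/2]} z dλ(z)) ∫_{(0,a]} z² dλ(z) > 0 (in fact the expression tends to infinity as a ↓ 0). -/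
open MeasureTheory Set Filter

private lemma fmeas : Measurable (fun z : ℝ => ENNReal.ofReal (-Real.log z / z ^ 2)) :=
  (Real.measurable_log.neg.div ((measurable_id.pow_const 2))).ennreal_ofReal

/-- Exact value of the `I` integral. -/
private lemma I_eq {a : ℝ} (ha : 0 < a) (ha2 : a < 1 / 2) :
    (∫⁻ z in Ioc a 1, ENNReal.ofReal z
        ∂((volume.restrict (Ioc (0 : ℝ) (1 / 2))).withDensity
          (fun z => ENNReal.ofReal (-Real.log z / z ^ 2))))
      = ENNReal.ofReal (((Real.log a) ^ 2 - (Real.log 2) ^ 2) / 2) := by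
  rw [setLIntegral_withDensity_eq_setLIntegral_mul _ fmeas
      (show Measurable fun z : ℝ => ENNReal.ofReal z from measurable_id.ennreal_ofReal)
      measurableSet_Ioc,
    Measure.restrict_restrict measurableSet_Ioc, Ioc_inter_Ioc]
  have hmax : a ⊔ (0 : ℝ) = a := max_eq_left ha.le
  have hmin : (1 : ℝ) ⊓ (1 / 2) = 1 / 2 := by norm_num
  rw [hmax, hmin]
  have hcongr : ∫⁻ z in Ioc a (1 / 2),
      ((fun z => ENNReal.ofReal (-Real.log z / z ^ 2)) * fun z => ENNReal.ofReal z) z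
      = ∫⁻ z in Ioc a (1 / 2), ENNReal.ofReal (-Real.log z / z) := by
    refine setLIntegral_congr_fun measurableSet_Ioc ?_
    intro z hz
    simp only [Pi.mul_apply]
    have hz0 : 0 < z := ha.trans hz.1
    have hlog : 0 ≤ -Real.log z := by
      have := Real.log_nonpos (by linarith) (by linarith [hz.2] : z ≤ 1)
      linarith
    rw [← ENNReal.ofReal_mul (by positivity)]
    congr 1
    field_simp
  rw [hcongr]
  have hint : IntegrableOn (fun z => -Real.log z / z) (Ioc a (1 / 2)) volume := by
    apply IntegrableOn.mono_set _ Ioc_subset_Icc_self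
    apply ContinuousOn.integrableOn_Icc
    apply ContinuousOn.div
    · exact (Real.continuousOn_log.mono (fun x hx => by
        simp only [mem_compl_iff, mem_singleton_iff]
        exact ne_of_gt (lt_of_lt_of_le ha hx.1))).neg
    · exact continuousOn_id
    · intro x hx; exact ne_of_gt (lt_of_lt_of_le ha hx.1)
  have hnn : 0 ≤ᶠ[ae (volume.restrict (Ioc a (1 / 2)))] fun z => -Real.log z / z := by
    refine (ae_restrict_iff' measurableSet_Ioc).mpr (Filter.Eventually.of_forall ?_)
    intro z hz
    have hz0 : 0 < z := ha.trans hz.1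
    have hlog : 0 ≤ -Real.log z := by
      have := Real.log_nonpos (by linarith) (by linarith [hz.2] : z ≤ 1)
      linarith
    positivity
  rw [← ofReal_integral_eq_lintegral_ofReal hint hnn]
  congr 1
  rw [← intervalIntegral.integral_of_le (by linarith)]
  have hderiv : ∀ x ∈ uIcc a (1 / 2),
      HasDerivAt (fun z => -(Real.log z) ^ 2 / 2) (-Real.log x / x) x := by
    intro x hx
    rw [uIcc_of_le (by linarith)] at hx
    have hx0 : 0 < x := ha.trans_le hx.1
    have h := (((Real.hasDerivAt_log hx0.ne').pow 2).neg.div_const 2)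
    refine h.congr_deriv ?_
    norm_num
    ring
  rw [intervalIntegral.integral_eq_sub_of_hasDerivAt hderiv
    ((intervalIntegrable_iff_integrableOn_Ioc_of_le (by linarith)).mpr hint)]
  have h2 : Real.log (1 / 2 : ℝ) = -Real.log 2 := by
    rw [one_div, Real.log_inv]
  rw [h2]
  ring

/-- Lower bound for the `J` integral. -/
private lemma J_ge {a : ℝ} (ha : 0 < a) (ha2 : a ≤ 1 / 2) :
    ENNReal.ofReal (a / 2 * Real.log 2)
      ≤ ∫⁻ z in Ioc (0 : ℝ) a, ENNReal.ofReal (z ^ 2)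
        ∂((volume.restrict (Ioc (0 : ℝ) (1 / 2))).withDensity
          (fun z => ENNReal.ofReal (-Real.log z / z ^ 2))) := by
  rw [setLIntegral_withDensity_eq_setLIntegral_mul _ fmeas
      (show Measurable fun z : ℝ => ENNReal.ofReal (z ^ 2) from
        (measurable_id.pow_const 2).ennreal_ofReal) measurableSet_Ioc,
    Measure.restrict_restrict measurableSet_Ioc, Ioc_inter_Ioc]
  have hmax : (0 : ℝ) ⊔ 0 = 0 := by simp
  have hmin : a ⊓ (1 / 2) = a := min_eq_left ha2
  rw [hmax, hmin]
  calc ENNReal.ofReal (a / 2 * Real.log 2)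
      = ∫⁻ _ in Ioc (a / 2) a, ENNReal.ofReal (Real.log 2) := by
        rw [setLIntegral_const, Real.volume_Ioc,
          ← ENNReal.ofReal_mul (Real.log_nonneg (by norm_num))]
        congr 1
        ring
    _ ≤ ∫⁻ z in Ioc (a / 2) a,
          ((fun z => ENNReal.ofReal (-Real.log z / z ^ 2)) * fun z => ENNReal.ofReal (z ^ 2)) z := by
        refine setLIntegral_mono (fmeas.mul ((measurable_id.pow_const 2).ennreal_ofReal)) ?_
        intro z hz
        simp only [Pi.mul_apply]
        have hz0 : 0 < z := lt_of_le_of_lt (by linarith : (0:ℝ) ≤ a / 2) hz.1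
        have hlog : Real.log 2 ≤ -Real.log z := by
          have : Real.log z ≤ Real.log (1 / 2 : ℝ) :=
            Real.log_le_log hz0 (le_trans hz.2 ha2)
          rw [one_div, Real.log_inv] at this
          linarith
        rw [← ENNReal.ofReal_mul (div_nonneg (by linarith [Real.log_pos (by norm_num : (1:ℝ) < 2)]) (by positivity))]
        apply ENNReal.ofReal_le_ofReal
        have : -Real.log z / z ^ 2 * z ^ 2 = -Real.log z := by
          field_simp
        rw [this]
        exact hlog
    _ ≤ ∫⁻ z in Ioc (0 : ℝ) a,
          ((fun z => ENNReal.ofReal (-Real.log z / z ^ 2)) * fun z => ENNReal.ofReal (z ^ 2)) z :=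
        lintegral_mono_set (Ioc_subset_Ioc_left (by linarith))

/-- The measure with density `(-log z)/z²` on `(0,1/2]` does not satisfy (F6):
for every `ε₀ > 0` the liminf is strictly positive. (Since the measure is
supported in `(0,1/2]`, integrating `z` over `(a,1]` is the same as over `(a,1/2]`.) -/
theorem stmt_16 :
    ∀ ε₀ > (0 : ℝ),
      0 < liminf
        (fun a : ℝ =>
          F6expr ((volume.restrict (Ioc (0 : ℝ) (1 / 2))).withDensity
            (fun z => ENNReal.ofReal (-Real.log z / z ^ 2))) ε₀ a)
        (nhdsWithin 0 (Ioi 0)) := by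
  intro ε₀ hε
  set δ : ℝ := min (1 / 4) (Real.exp (-(Real.log 2 + 2 / ε₀))) with hδdef
  have hδpos : 0 < δ := lt_min (by norm_num) (Real.exp_pos _)
  refine lt_of_lt_of_le
    (show (0 : ENNReal) < ENNReal.ofReal (Real.log 2 / 2) from
      ENNReal.ofReal_pos.mpr (by positivity)) ?_
  refine Filter.le_liminf_of_le (by isBoundedDefault) ?_
  filter_upwards [Ioo_mem_nhdsGT_of_mem (show (0 : ℝ) ∈ Ico 0 δ from ⟨le_refl _, hδpos⟩)]
    with a ha
  obtain ⟨ha0, haδ⟩ := ha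
  have ha4 : a < 1 / 4 := lt_of_lt_of_le haδ (min_le_left _ _)
  have ha2 : a < 1 / 2 := by linarith
  have hlog2 : (0 : ℝ) < Real.log 2 := Real.log_pos (by norm_num)
  -- key: ε₀ * v + log a ≥ 0
  set t : ℝ := -Real.log a with htdef
  clear_value t
  have ht : Real.log 2 + 2 / ε₀ < t := by
    have : a < Real.exp (-(Real.log 2 + 2 / ε₀)) := lt_of_lt_of_le haδ (min_le_right _ _)
    have := Real.log_lt_log ha0 this
    rw [Real.log_exp] at this
    simp only [htdef]
    linarith
  have hv : 0 ≤ ((Real.log a) ^ 2 - (Real.log 2) ^ 2) / 2 := by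
    have h1 : Real.log 2 ≤ t := by linarith [div_pos (by norm_num : (0:ℝ) < 2) hε]
    have : (Real.log 2) ^ 2 ≤ t ^ 2 := pow_le_pow_left₀ hlog2.le h1 2
    have ht2 : t ^ 2 = (Real.log a) ^ 2 := by rw [htdef]; ring
    linarith [ht2 ▸ this]
  have hkey : 0 ≤ ε₀ * (((Real.log a) ^ 2 - (Real.log 2) ^ 2) / 2) + Real.log a := by
    have h2 : 2 < (t - Real.log 2) * ε₀ := by
      have := (div_lt_iff₀ hε).mp (by linarith : 2 / ε₀ < t - Real.log 2)
      linarith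
    have h3 : 0 < t + Real.log 2 := by
      linarith [div_pos (by norm_num : (0:ℝ) < 2) hε]
    have hla : Real.log a = -t := by rw [htdef]; ring
    rw [hla]
    have h4 := mul_lt_mul_of_pos_right h2 h3
    have h5 : (t - Real.log 2) * ε₀ * (t + Real.log 2) = ε₀ * (t ^ 2 - Real.log 2 ^ 2) := by
      ring
    rw [h5] at h4
    have h6 : (-t) ^ 2 = t ^ 2 := by ring
    rw [h6]
    nlinarith [h4]
  unfold F6expr
  rw [I_eq ha0 ha2, ENNReal.toReal_ofReal hv]
  calc ENNReal.ofReal (Real.log 2 / 2)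
      ≤ ENNReal.ofReal (Real.exp (ε₀ * (((Real.log a) ^ 2 - (Real.log 2) ^ 2) / 2)))
        * ENNReal.ofReal (a / 2 * Real.log 2) := by
        rw [← ENNReal.ofReal_mul (Real.exp_nonneg _)]
        apply ENNReal.ofReal_le_ofReal
        have ha' : a = Real.exp (Real.log a) := (Real.exp_log ha0).symm
        calc Real.log 2 / 2
            = 1 * (1 / 2 * Real.log 2) := by ring
          _ ≤ Real.exp (ε₀ * (((Real.log a) ^ 2 - (Real.log 2) ^ 2) / 2) + Real.log a)
              * (1 / 2 * Real.log 2) := by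
              apply mul_le_mul_of_nonneg_right _ (by positivity)
              rw [← Real.exp_zero]
              exact Real.exp_le_exp.mpr hkey
          _ = Real.exp (ε₀ * (((Real.log a) ^ 2 - (Real.log 2) ^ 2) / 2))
              * (Real.exp (Real.log a) * (1 / 2 * Real.log 2)) := by
              rw [Real.exp_add]; ring
          _ = Real.exp (ε₀ * (((Real.log a) ^ 2 - (Real.log 2) ^ 2) / 2))
              * (a / 2 * Real.log 2) := by
              rw [← ha']; ring_nf
    _ ≤ _ := by
        exact mul_le_mul_right (J_ge ha0 ha2.le) _
end
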